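/- Let H be a real Hilbert space, T : D(T) ⊆ H → K a densely defined closed operator between Hilbert spaces, f ∈ K, and C > 0 a constant such that |⟨f, v⟩_K|² ≤ C · ‖T* v‖²_H for all v ∈ D(T*). Then there exists u ∈ H with T u = f and ‖u‖²_H ≤ C. -/

import Mathlib

open scoped RealInnerProductSpace

/-- If `T` is a densely defined closed operator between real Hilbert spaces,
`f ∈ K`, and `⟨f, v⟩² ≤ C‖T*v‖²` for all `v` in the domain of the adjoint, then there is
`u` in the domain of `T` with `T u = f` and `‖u‖² ≤ C`. -/
theorem stmt2 (H K : Type*)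
    [NormedAddCommGroup H] [InnerProductSpace ℝ H] [CompleteSpace H]
    [NormedAddCommGroup K] [InnerProductSpace ℝ K] [CompleteSpace K]
    (T : H →ₗ.[ℝ] K) (hdense : Dense (T.domain : Set H)) (hclosed : T.IsClosed)
    (f : K) (C : ℝ) (hC : 0 < C)
    (hbound : ∀ v : T.adjoint.domain, ⟪f, (v : K)⟫ ^ 2 ≤ C * ‖T.adjoint v‖ ^ 2) :
    ∃ u : T.domain, T u = f ∧ ‖(u : H)‖ ^ 2 ≤ C := by
  classical
  set A : T.adjoint.domain →ₗ[ℝ] H := T.adjoint.toFun with hA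
  -- the functional v ↦ ⟪f, v⟫ on the adjoint domain
  set ψ : T.adjoint.domain →ₗ[ℝ] ℝ := (innerₛₗ ℝ f).comp T.adjoint.domain.subtype with hψ
  have hψ_apply : ∀ v : T.adjoint.domain, ψ v = ⟪f, (v : K)⟫ := fun v => rfl
  have habs : ∀ v : T.adjoint.domain, |ψ v| ≤ Real.sqrt C * ‖A v‖ := by
    intro v
    have h := hbound v
    have h2 : (ψ v) ^ 2 ≤ (Real.sqrt C * ‖A v‖) ^ 2 := by
      rw [mul_pow, Real.sq_sqrt hC.le]
      exact h
    have h3 := Real.sqrt_le_sqrt h2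
    rw [Real.sqrt_sq_eq_abs, Real.sqrt_sq_eq_abs] at h3
    calc |ψ v| ≤ |Real.sqrt C * ‖A v‖| := h3
      _ = Real.sqrt C * ‖A v‖ := abs_of_nonneg (by positivity)
  have hker : LinearMap.ker A ≤ LinearMap.ker ψ := by
    intro v hv
    rw [LinearMap.mem_ker] at hv ⊢
    have := habs v
    rw [hv, norm_zero, mul_zero] at this
    exact abs_nonpos_iff.mp this
  -- factor ψ through the range of A
  set φ₀ : LinearMap.range A →ₗ[ℝ] ℝ :=
    ((LinearMap.ker A).liftQ ψ hker).comp A.quotKerEquivRange.symm.toLinearMap with hφ₀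
  have hφ₀_apply : ∀ v : T.adjoint.domain, φ₀ ⟨A v, LinearMap.mem_range_self A v⟩ = ψ v := by
    intro v
    simp only [hφ₀, LinearMap.coe_comp, Function.comp_apply, LinearEquiv.coe_coe]
    rw [LinearMap.quotKerEquivRange_symm_apply_image A v]
    rfl
  have hφ₀_bound : ∀ w : LinearMap.range A, ‖φ₀ w‖ ≤ Real.sqrt C * ‖w‖ := by
    rintro ⟨w, v, rfl⟩
    rw [hφ₀_apply v]
    simpa using habs v
  set φ : LinearMap.range A →L[ℝ] ℝ := φ₀.mkContinuous (Real.sqrt C) hφ₀_bound with hφ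
  have hφ_norm : ‖φ‖ ≤ Real.sqrt C :=
    φ₀.mkContinuous_norm_le (Real.sqrt_nonneg C) hφ₀_bound
  obtain ⟨g, hg, hgnorm⟩ := exists_extension_norm_eq (LinearMap.range A) φ
  set u : H := (InnerProductSpace.toDual ℝ H).symm g with hu
  have hu_inner : ∀ x : H, ⟪u, x⟫ = g x := fun x =>
    InnerProductSpace.toDual_symm_apply
  have hu_norm : ‖u‖ ^ 2 ≤ C := by
    have h1 : ‖u‖ = ‖g‖ := (InnerProductSpace.toDual ℝ H).symm.norm_map g
    have h2 : ‖u‖ ≤ Real.sqrt C := by rw [h1, hgnorm]; exact hφ_norm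
    calc ‖u‖ ^ 2 ≤ Real.sqrt C ^ 2 := by
            exact pow_le_pow_left₀ (norm_nonneg u) h2 2
      _ = C := Real.sq_sqrt hC.le
  have hu1 : ∀ v : T.adjoint.domain, ⟪u, T.adjoint v⟫ = ⟪f, (v : K)⟫ := by
    intro v
    rw [hu_inner]
    have : T.adjoint v = A v := rfl
    rw [this]
    have := hg ⟨A v, LinearMap.mem_range_self A v⟩
    rw [this]
    have : φ ⟨A v, LinearMap.mem_range_self A v⟩ = φ₀ ⟨A v, LinearMap.mem_range_self A v⟩ := rfl
    rw [this, hφ₀_apply v, hψ_apply]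
  -- Now show (u, f) ∈ T.graph via double orthogonal complement in WithLp 2 (H × K)
  set e := WithLp.linearEquiv 2 ℝ (H × K) with he
  set G : Submodule ℝ (WithLp 2 (H × K)) := T.graph.comap e.toLinearMap with hG
  have hGclosed : IsClosed (G : Set (WithLp 2 (H × K))) := by
    have : (G : Set (WithLp 2 (H × K))) =
        (WithLp.prodContinuousLinearEquiv 2 ℝ H K) ⁻¹' (T.graph : Set (H × K)) := rfl
    rw [this]
    exact hclosed.preimage (WithLp.prodContinuousLinearEquiv 2 ℝ H K).continuous
  have : CompleteSpace G := hGclosed.completeSpace_coe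
  have hGG : Gᗮᗮ = G := Submodule.orthogonal_orthogonal G
  have hpmem : e.symm (u, f) ∈ Gᗮᗮ := by
    rw [Submodule.mem_orthogonal]
    intro w hw
    rw [Submodule.mem_orthogonal] at hw
    -- w.snd is in the adjoint domain with adjoint value -w.fst
    have hwx : ∀ x : T.domain, ⟪(x : H), w.fst⟫ + ⟪T x, w.snd⟫ = 0 := by
      intro x
      have hx : e.symm ((x : H), T x) ∈ G := by
        simp only [hG, Submodule.mem_comap]
        have : e (e.symm ((x : H), T x)) = ((x : H), T x) := e.apply_symm_apply _
        rw [LinearEquiv.coe_coe, this]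
        exact T.mem_graph x
      have := hw _ hx
      rw [WithLp.prod_inner_apply] at this
      exact this
    have hform : ∀ x : T.domain, ⟪-w.fst, (x : H)⟫ = ⟪w.snd, T x⟫ := by
      intro x
      have h := hwx x
      have e1 : ⟪(x : H), w.fst⟫ = ⟪w.fst, (x : H)⟫ := real_inner_comm _ _
      have e2 : ⟪T x, w.snd⟫ = ⟪w.snd, T x⟫ := real_inner_comm _ _
      have e3 : ⟪-w.fst, (x : H)⟫ = -⟪w.fst, (x : H)⟫ := inner_neg_left _ _
      linarith
    have hmem : w.snd ∈ T.adjoint.domain :=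
      T.mem_adjoint_domain_of_exists _ ⟨-w.fst, hform⟩
    have hval : T.adjoint ⟨w.snd, hmem⟩ = -w.fst :=
      LinearPMap.adjoint_apply_eq hdense ⟨w.snd, hmem⟩ hform
    have hinner := hu1 ⟨w.snd, hmem⟩
    rw [hval] at hinner
    have hinner' : ⟪u, -w.fst⟫ = ⟪f, w.snd⟫ := hinner
    have hfst : (e.symm (u, f)).fst = u := rfl
    have hsnd : (e.symm (u, f)).snd = f := rfl
    rw [WithLp.prod_inner_apply]
    change ⟪w.fst, u⟫ + ⟪w.snd, f⟫ = 0
    have e1 : ⟪w.fst, u⟫ = ⟪u, w.fst⟫ := real_inner_comm _ _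
    have e2 : ⟪w.snd, f⟫ = ⟪f, w.snd⟫ := real_inner_comm _ _
    have e3 : ⟪u, -w.fst⟫ = -⟪u, w.fst⟫ := inner_neg_right _ _
    linarith
  rw [hGG] at hpmem
  have hgraph : (u, f) ∈ T.graph := by
    have : e (e.symm (u, f)) ∈ T.graph := hpmem
    rwa [e.apply_symm_apply] at this
  rw [LinearPMap.mem_graph_iff] at hgraph
  obtain ⟨x, hx1, hx2⟩ := hgraph
  exact ⟨x, hx2, by rw [hx1]; exact hu_norm⟩
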